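/- Fix k ∈ ℕ and let φ : (0,∞) → ℝ satisfy the self-similarity relation φ(4u) = 4^{k+3} φ(u) for all u > 0. Suppose φ is of class C^{k+3} on (0,∞) and that for each ℓ = 0, 1, ..., k+3 the ℓ-th derivative φ^{(ℓ)} is bounded on the interval [1,4]. Extend φ to [0,∞) by setting φ(0) = 0. Then φ is of class C^{k+2} on [0,∞), and φ^{(ℓ)}(u) → 0 as u → 0+ for every ℓ = 0, 1, ..., k+2. -/

import Mathlib

open Set Filter

theorem stmt10 (k : ℕ) (φ : ℝ → ℝ)
    (hself : ∀ u : ℝ, 0 < u → φ (4 * u) = 4 ^ (k + 3) * φ u)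
    (hsmooth : ContDiffOn ℝ (k + 3) φ (Set.Ioi 0))
    (hbdd : ∀ ℓ ≤ k + 3, ∃ C : ℝ, ∀ u ∈ Set.Icc (1:ℝ) 4,
      |iteratedDerivWithin ℓ φ (Set.Ioi 0) u| ≤ C)
    (ψ : ℝ → ℝ)
    (hψ : ∀ u : ℝ, ψ u = if u ≤ 0 then 0 else φ u) :
    ContDiffOn ℝ (k + 2) ψ (Set.Ici 0) ∧
      ∀ ℓ ≤ k + 2,
        Tendsto (iteratedDerivWithin ℓ φ (Set.Ioi 0)) (nhdsWithin 0 (Set.Ioi 0)) (nhds 0) := by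
  set f : ℕ → ℝ → ℝ := fun ℓ => iteratedDerivWithin ℓ φ (Set.Ioi 0) with hf
  -- the derivative of `f ℓ` within `Ioi 0` at a positive point is `f (ℓ+1)`
  have hfd : ∀ ℓ < k + 3, ∀ x : ℝ, 0 < x →
      HasDerivWithinAt (f ℓ) (f (ℓ + 1) x) (Set.Ioi 0) x := by
    intro ℓ hℓ x hx
    have hdiff : DifferentiableOn ℝ (f ℓ) (Set.Ioi 0) :=
      hsmooth.differentiableOn_iteratedDerivWithin (by exact_mod_cast hℓ) (uniqueDiffOn_Ioi 0)
    have h1 : f (ℓ + 1) x = derivWithin (f ℓ) (Set.Ioi 0) x :=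
      congrFun iteratedDerivWithin_succ x
    rw [h1]
    exact (hdiff x hx).hasDerivWithinAt
  -- self-similarity of all derivatives
  have hself' : ∀ ℓ ≤ k + 3, ∀ u : ℝ, 0 < u →
      4 ^ ℓ * f ℓ (4 * u) = 4 ^ (k + 3) * f ℓ u := by
    intro ℓ
    induction ℓ with
    | zero =>
      intro _ u hu
      simpa [hf, iteratedDerivWithin_zero] using hself u hu
    | succ ℓ IH =>
      intro hℓ u hu
      have hℓ' : ℓ < k + 3 := by omega
      have IH' := IH (by omega)
      have h4u : (0:ℝ) < 4 * u := by linarith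
      -- the scaled function
      have hmul : HasDerivWithinAt (fun v : ℝ => 4 * v) 4 (Set.Ioi 0) u := by
        simpa using ((hasDerivAt_id u).const_mul (4:ℝ)).hasDerivWithinAt
      have hmaps : Set.MapsTo (fun v : ℝ => 4 * v) (Set.Ioi 0) (Set.Ioi 0) := by
        intro v hv
        simp only [Set.mem_Ioi] at hv ⊢
        linarith
      have hcomp : HasDerivWithinAt (fun v => f ℓ (4 * v)) (f (ℓ + 1) (4 * u) * 4)
          (Set.Ioi 0) u :=
        HasDerivWithinAt.comp u (hfd ℓ hℓ' (4 * u) h4u) hmul hmaps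
      have hG1 : HasDerivWithinAt (fun v => 4 ^ ℓ * f ℓ (4 * v))
          (4 ^ ℓ * (f (ℓ + 1) (4 * u) * 4)) (Set.Ioi 0) u := hcomp.const_mul _
      have hG2 : HasDerivWithinAt (fun v => 4 ^ ℓ * f ℓ (4 * v))
          (4 ^ (k + 3) * f (ℓ + 1) u) (Set.Ioi 0) u := by
        have := ((hfd ℓ hℓ' u hu).const_mul ((4:ℝ) ^ (k + 3)))
        exact this.congr (fun v hv => IH' v hv) (IH' u hu)
      have huniq : (4:ℝ) ^ ℓ * (f (ℓ + 1) (4 * u) * 4) = 4 ^ (k + 3) * f (ℓ + 1) u := by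
        rw [← hG1.derivWithin ((uniqueDiffOn_Ioi 0) u hu),
          ← hG2.derivWithin ((uniqueDiffOn_Ioi 0) u hu)]
      calc 4 ^ (ℓ + 1) * f (ℓ + 1) (4 * u) = 4 ^ ℓ * (f (ℓ + 1) (4 * u) * 4) := by ring
        _ = 4 ^ (k + 3) * f (ℓ + 1) u := huniq
  -- linear bound near zero for derivatives of order ≤ k+2
  have hbound : ∀ ℓ ≤ k + 2, ∃ C : ℝ, 0 ≤ C ∧
      ∀ u : ℝ, 0 < u → u ≤ 4 → |f ℓ u| ≤ C * u := by
    intro ℓ hℓ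
    obtain ⟨C0, hC0⟩ := hbdd ℓ (by omega)
    refine ⟨max C0 0, le_max_right _ _, ?_⟩
    set C := max C0 0 with hC
    have hCnn : (0:ℝ) ≤ C := le_max_right _ _
    -- by induction on n : every u ∈ [4^(-n), 4] satisfies the bound
    have key : ∀ n : ℕ, ∀ u : ℝ, ((4:ℝ) ^ n)⁻¹ ≤ u → u ≤ 4 → |f ℓ u| ≤ C * u := by
      intro n
      induction n with
      | zero =>
        intro u h1 h4
        simp only [pow_zero, inv_one] at h1
        have := hC0 u ⟨h1, h4⟩
        calc |f ℓ u| ≤ C0 := this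
          _ ≤ C := le_max_left _ _
          _ = C * 1 := (mul_one C).symm
          _ ≤ C * u := by nlinarith
      | succ n IH =>
        intro u h1 h4
        by_cases hcase : ((4:ℝ) ^ n)⁻¹ ≤ u
        · exact IH u hcase h4
        · push_neg at hcase
          have hpow : (0:ℝ) < ((4:ℝ) ^ (n+1))⁻¹ := by positivity
          have hu : 0 < u := lt_of_lt_of_le hpow h1
          have h4u1 : ((4:ℝ) ^ n)⁻¹ ≤ 4 * u := by
            have : ((4:ℝ) ^ (n+1))⁻¹ = ((4:ℝ) ^ n)⁻¹ / 4 := by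
              rw [pow_succ]; field_simp
            rw [this] at h1
            linarith
          have h4u4 : 4 * u ≤ 4 := by
            have : ((4:ℝ) ^ n)⁻¹ ≤ 1 := by
              rw [inv_le_one_iff₀]; right; exact one_le_pow₀ (by norm_num)
            nlinarith
          have hIH := IH (4 * u) h4u1 h4u4
          have hs := hself' ℓ (by omega) u hu
          have habs : (4:ℝ) ^ (k+3) * |f ℓ u| = 4 ^ ℓ * |f ℓ (4 * u)| := by
            rw [← abs_of_nonneg (a := (4:ℝ) ^ (k+3)) (by positivity),
              ← abs_of_nonneg (a := (4:ℝ) ^ ℓ) (by positivity), ← abs_mul, ← abs_mul, hs]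
          have hle : (4:ℝ) ^ ℓ ≤ 4 ^ (k + 2) := pow_le_pow_right₀ (by norm_num) hℓ
          have : (4:ℝ) ^ (k+3) * |f ℓ u| ≤ 4 ^ (k+3) * (C * u) := by
            rw [habs]
            calc (4:ℝ) ^ ℓ * |f ℓ (4 * u)| ≤ 4 ^ (k+2) * (C * (4 * u)) := by
                  apply mul_le_mul hle hIH (abs_nonneg _) (by positivity)
              _ = 4 ^ (k+3) * (C * u) := by ring
          exact le_of_mul_le_mul_left this (by positivity)
    intro u hu h4
    obtain ⟨n, hn⟩ := pow_unbounded_of_one_lt u⁻¹ (by norm_num : (1:ℝ) < 4)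
    have : ((4:ℝ) ^ n)⁻¹ ≤ u := by
      rw [inv_le_comm₀ (by positivity) hu] at *
      exact le_of_lt hn
    exact key n u this h4
  -- the tendsto statement
  have htend : ∀ ℓ ≤ k + 2, Tendsto (f ℓ) (nhdsWithin 0 (Set.Ioi 0)) (nhds 0) := by
    intro ℓ hℓ
    obtain ⟨C, hCnn, hC⟩ := hbound ℓ hℓ
    have hev : ∀ᶠ u in nhdsWithin (0:ℝ) (Set.Ioi 0), |f ℓ u| ≤ C * u := by
      have h4 : Set.Iio (4:ℝ) ∈ nhdsWithin (0:ℝ) (Set.Ioi 0) :=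
        mem_nhdsWithin_of_mem_nhds (Iio_mem_nhds (by norm_num))
      filter_upwards [self_mem_nhdsWithin, h4] with u hu hu4
      exact hC u hu (le_of_lt hu4)
    have hup : Tendsto (fun u : ℝ => C * u) (nhdsWithin 0 (Set.Ioi 0)) (nhds 0) := by
      have : Tendsto (fun u : ℝ => C * u) (nhds 0) (nhds 0) := by
        simpa using (continuous_mul_left C).tendsto (0:ℝ)
      exact this.mono_left nhdsWithin_le_nhds
    have hlo : Tendsto (fun u : ℝ => -(C * u)) (nhdsWithin 0 (Set.Ioi 0)) (nhds 0) := by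
      simpa using hup.neg
    refine tendsto_of_tendsto_of_tendsto_of_le_of_le' hlo hup ?_ ?_
    · filter_upwards [hev] with u hu; exact (abs_le.1 hu).1
    · filter_upwards [hev] with u hu; exact (abs_le.1 hu).2
  -- extension to the closed half line
  set D : ℕ → ℝ → ℝ := fun ℓ u => if u ≤ 0 then 0 else f ℓ u with hD
  have hDpos : ∀ ℓ, ∀ x : ℝ, 0 < x → D ℓ x = f ℓ x := by
    intro ℓ x hx
    simp [hD, not_le.2 hx]
  have hDev : ∀ ℓ, ∀ x : ℝ, 0 < x → D ℓ =ᶠ[nhds x] f ℓ := by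
    intro ℓ x hx
    filter_upwards [Ioi_mem_nhds hx] with y hy
    exact hDpos ℓ y hy
  -- continuity of D ℓ at 0 within Ici 0
  have hDcont0 : ∀ ℓ ≤ k + 2, ContinuousWithinAt (D ℓ) (Set.Ici 0) 0 := by
    intro ℓ hℓ
    obtain ⟨C, hCnn, hC⟩ := hbound ℓ hℓ
    have hev : ∀ᶠ u in nhdsWithin (0:ℝ) (Set.Ici 0), |D ℓ u| ≤ C * u := by
      have h4 : Set.Iio (4:ℝ) ∈ nhdsWithin (0:ℝ) (Set.Ici 0) :=
        mem_nhdsWithin_of_mem_nhds (Iio_mem_nhds (by norm_num))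
      filter_upwards [self_mem_nhdsWithin, h4] with u hu hu4
      rcases lt_or_eq_of_le (Set.mem_Ici.1 hu) with h | h
      · rw [hDpos ℓ u h]; exact hC u h (le_of_lt hu4)
      · simp [hD, ← h, mul_nonneg hCnn]
    have hup : Tendsto (fun u : ℝ => C * u) (nhdsWithin 0 (Set.Ici 0)) (nhds 0) := by
      have : Tendsto (fun u : ℝ => C * u) (nhds 0) (nhds 0) := by
        simpa using (continuous_mul_left C).tendsto (0:ℝ)
      exact this.mono_left nhdsWithin_le_nhds
    have hlo : Tendsto (fun u : ℝ => -(C * u)) (nhdsWithin 0 (Set.Ici 0)) (nhds 0) := by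
      simpa using hup.neg
    have hD0 : D ℓ 0 = 0 := by simp [hD]
    unfold ContinuousWithinAt
    rw [hD0]
    refine tendsto_of_tendsto_of_tendsto_of_le_of_le' hlo hup ?_ ?_
    · filter_upwards [hev] with u hu; exact (abs_le.1 hu).1
    · filter_upwards [hev] with u hu; exact (abs_le.1 hu).2
  -- D ℓ has derivative D (ℓ+1) at every point of Ici 0
  have hDhasDerivAt : ∀ ℓ < k + 3, ∀ x : ℝ, 0 < x → HasDerivAt (D ℓ) (D (ℓ + 1) x) x := by
    intro ℓ hℓ x hx
    have h1 : HasDerivAt (f ℓ) (f (ℓ + 1) x) x :=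
      (hfd ℓ hℓ x hx).hasDerivAt (Ioi_mem_nhds hx)
    rw [hDpos (ℓ + 1) x hx]
    exact h1.congr_of_eventuallyEq (hDev ℓ x hx)
  have hDderiv : ∀ ℓ ≤ k + 1, ∀ x ∈ Set.Ici (0:ℝ),
      HasDerivWithinAt (D ℓ) (D (ℓ + 1) x) (Set.Ici 0) x := by
    intro ℓ hℓ x hx
    rcases lt_or_eq_of_le (Set.mem_Ici.1 hx) with h | h
    · exact (hDhasDerivAt ℓ (by omega) x h).hasDerivWithinAt
    · subst h
      have hD0 : D (ℓ + 1) (0:ℝ) = 0 := by simp [hD]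
      rw [hD0]
      apply hasDerivWithinAt_Ici_of_tendsto_deriv (s := Set.Ioi 0)
      · intro y hy
        exact ((hDhasDerivAt ℓ (by omega) y hy).differentiableAt).differentiableWithinAt
      · exact (hDcont0 ℓ (by omega)).mono Set.Ioi_subset_Ici_self
      · exact self_mem_nhdsWithin
      · have hcongr : ∀ᶠ y in nhdsWithin (0:ℝ) (Set.Ioi 0),
            deriv (D ℓ) y = f (ℓ + 1) y := by
          filter_upwards [self_mem_nhdsWithin] with y hy
          rw [(hDhasDerivAt ℓ (by omega) y hy).deriv, hDpos (ℓ + 1) y hy]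
        exact (htend (ℓ + 1) (by omega)).congr' (by filter_upwards [hcongr] with y h using h.symm)
  -- iterated derivatives of ψ agree with D
  have hψD : ∀ ℓ ≤ k + 2, Set.EqOn (iteratedDerivWithin ℓ ψ (Set.Ici 0)) (D ℓ) (Set.Ici 0) := by
    intro ℓ
    induction ℓ with
    | zero =>
      intro _ x _
      rw [iteratedDerivWithin_zero, hψ x]
      by_cases h : x ≤ 0 <;> simp [hD, h, hf, iteratedDerivWithin_zero]
    | succ ℓ IH =>
      intro hℓ x hx
      have hud := (uniqueDiffOn_Ici (0:ℝ)) x hx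
      rw [iteratedDerivWithin_succ,
        derivWithin_congr (IH (by omega)) (IH (by omega) hx),
        (hDderiv ℓ (by omega) x hx).derivWithin hud]
  -- continuity of D ℓ on Ici 0
  have hDcont : ∀ ℓ ≤ k + 2, ContinuousOn (D ℓ) (Set.Ici 0) := by
    intro ℓ hℓ x hx
    rcases lt_or_eq_of_le (Set.mem_Ici.1 hx) with h | h
    · have hc : ContinuousOn (f ℓ) (Set.Ioi 0) :=
        hsmooth.continuousOn_iteratedDerivWithin (by exact_mod_cast (by omega : ℓ ≤ k + 3))
          (uniqueDiffOn_Ioi 0)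
      have : ContinuousAt (f ℓ) x := hc.continuousAt (Ioi_mem_nhds h)
      exact (this.congr (hDev ℓ x h).symm).continuousWithinAt
    · subst h
      exact hDcont0 ℓ hℓ
  constructor
  · apply contDiffOn_of_continuousOn_differentiableOn_deriv (n := (k + 2 : ℕ∞))
    · intro m hm
      have hm' : m ≤ k + 2 := by exact_mod_cast hm
      exact (hDcont m hm').congr (hψD m hm')
    · intro m hm
      have hm' : m < k + 2 := by exact_mod_cast hm
      have : DifferentiableOn ℝ (D m) (Set.Ici 0) := fun x hx =>
        (hDderiv m (by omega) x hx).differentiableWithinAt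
      exact this.congr (hψD m (by omega))
  · exact htend
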